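/- Let G be a bipartite graph with variable nodes of degree γ ≥ 3 each, check nodes of degree 1 or 2, such that G is 4-cycle free and every 8-cycle of G is chordless. If G has a variable nodes, b degree-1 check nodes, and b < a, then a ≥ 2γ − 2. -/

import Mathlib

open SimpleGraph Finset

/-- A cycle (given as a closed walk) in a graph has a chord if either there is an
edge of the graph between two vertices of the cycle that is not an edge of the cycle,
or there is a vertex outside the cycle adjacent to two distinct vertices of the cycle. -/
def HasChord {V : Type*} (G : SimpleGraph V) {v : V} (c : G.Walk v v) : Prop :=
  (∃ x ∈ c.support, ∃ y ∈ c.support, G.Adj x y ∧ s(x, y) ∉ c.edges) ∨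
  (∃ w, w ∉ c.support ∧ ∃ x ∈ c.support, ∃ y ∈ c.support, x ≠ y ∧ G.Adj w x ∧ G.Adj w y)

/-- The variable-node graph. -/
def VN {V : Type*} (G : SimpleGraph V) (isVar : V → Prop) : SimpleGraph V where
  Adj x y := x ≠ y ∧ isVar x ∧ isVar y ∧ ∃ c, ¬ isVar c ∧ G.Adj c x ∧ G.Adj c y
  symm := ⟨by
    rintro x y ⟨h1, h2, h3, c, hc, hcx, hcy⟩
    exact ⟨h1.symm, h3, h2, c, hc, hcy, hcx⟩⟩
  loopless := ⟨fun x h => h.1 rfl⟩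

instance {V : Type*} [Fintype V] [DecidableEq V] (G : SimpleGraph V) [DecidableRel G.Adj]
    (isVar : V → Prop) [DecidablePred isVar] : DecidableRel (VN G isVar).Adj := fun x y =>
  decidable_of_iff (x ≠ y ∧ isVar x ∧ isVar y ∧ ∃ c, ¬ isVar c ∧ G.Adj c x ∧ G.Adj c y) Iff.rfl

section Aux
variable {V : Type*} [Fintype V] [DecidableEq V]
    (G : SimpleGraph V) [DecidableRel G.Adj]
    (isVar : V → Prop) [DecidablePred isVar]

/-- A check node cannot have three distinct neighbours. -/
lemma deg3 (hdegC : ∀ w, ¬ isVar w → G.degree w = 1 ∨ G.degree w = 2)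
    {c p q r : V} (hc : ¬ isVar c) (hpq : p ≠ q) (hpr : p ≠ r) (hqr : q ≠ r)
    (h1 : G.Adj c p) (h2 : G.Adj c q) (h3 : G.Adj c r) : False := by
  have hsub : ({p, q, r} : Finset V) ⊆ G.neighborFinset c := by
    intro x hx
    simp only [mem_insert, mem_singleton] at hx
    rcases hx with rfl | rfl | rfl <;> simp [h1, h2, h3]
  have h3le : 3 ≤ G.degree c := by
    rw [← card_neighborFinset_eq_degree]
    calc 3 = ({p, q, r} : Finset V).card := by
            rw [card_insert_of_notMem (by simp [hpq, hpr]),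
              card_insert_of_notMem (by simp [hqr]), card_singleton]
      _ ≤ _ := card_le_card hsub
  rcases hdegC c hc with h | h <;> omega

/-- Two distinct checks joined to the same pair of distinct vertices give a 4-cycle. -/
lemma fourcyc (h4 : ∀ (v : V) (c : G.Walk v v), c.IsCycle → c.length ≠ 4)
    {v u c c' : V} (hvu : v ≠ u) (hcc : c ≠ c')
    (h1 : G.Adj c v) (h2 : G.Adj c u) (h3 : G.Adj c' v) (h4' : G.Adj c' u) : False := by
  let p : G.Walk v v :=
    Walk.cons h1.symm (Walk.cons h2 (Walk.cons h4'.symm (Walk.cons h3 Walk.nil)))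
  apply h4 v p _ (by simp [p])
  constructor
  · constructor
    · constructor
      simp only [p, Walk.edges_cons, Walk.edges_nil, List.nodup_cons, List.mem_cons,
        List.not_mem_nil, or_false, List.nodup_nil, and_true, Sym2.eq_iff]
      have e1 := h1.ne
      have e2 := h2.ne
      have e3 := h3.ne
      have e4 := h4'.ne
      tauto
    · simp [p]
  · simp only [p, Walk.support_cons, Walk.support_nil, List.tail_cons, List.nodup_cons,
      List.mem_cons, List.not_mem_nil, or_false, List.nodup_nil, and_true, List.mem_singleton]
    have e1 := h1.ne
    have e2 := h2.ne
    have e3 := h3.ne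
    have e4 := h4'.ne
    tauto

set_option maxHeartbeats 1000000 in
/-- Diamond-freeness of the VN graph. -/
lemma diamondfree
    (hbip : ∀ x y, G.Adj x y → (isVar x ↔ ¬ isVar y))
    (hdegC : ∀ w, ¬ isVar w → G.degree w = 1 ∨ G.degree w = 2)
    (h8 : ∀ (v : V) (c : G.Walk v v), c.IsCycle → c.length = 8 → ¬ HasChord G c)
    {x y z w : V} (hzw : z ≠ w)
    (hxy : (VN G isVar).Adj x y) (hxz : (VN G isVar).Adj x z) (hyz : (VN G isVar).Adj y z)
    (hxw : (VN G isVar).Adj x w) (hyw : (VN G isVar).Adj y w) : False := by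
  obtain ⟨hxy', hvx, hvy, c0, hc0, hc0x, hc0y⟩ := hxy
  obtain ⟨hxz', hvx', hvz, c1, hc1, hc1x, hc1z⟩ := hxz
  obtain ⟨hyz', -, -, c2, hc2, hc2y, hc2z⟩ := hyz
  obtain ⟨hxw', -, hvw, c4, hc4, hc4x, hc4w⟩ := hxw
  obtain ⟨hyw', -, -, c3, hc3, hc3y, hc3w⟩ := hyw
  -- distinctness of checks
  have dc : ∀ c c' p q r : V, ¬ isVar c → p ≠ q → p ≠ r → q ≠ r →
      G.Adj c p → G.Adj c q → G.Adj c' r → c ≠ c' := by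
    rintro c c' p q r hc hpq hpr hqr h1 h2 h3 rfl
    exact deg3 G isVar hdegC hc hpq hpr hqr h1 h2 h3
  have nxy : x ≠ y := hxy'
  have nxz : x ≠ z := hxz'
  have nxw : x ≠ w := hxw'
  have nyz : y ≠ z := hyz'
  have nyw : y ≠ w := hyw'
  have d12 : c1 ≠ c2 := dc c1 c2 x z y hc1 nxz nxy nyz.symm hc1x hc1z hc2y
  have d13 : c1 ≠ c3 := dc c1 c3 x z y hc1 nxz nxy nyz.symm hc1x hc1z hc3y
  have d14 : c1 ≠ c4 := dc c1 c4 x z w hc1 nxz nxw hzw hc1x hc1z hc4w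
  have d23 : c2 ≠ c3 := dc c2 c3 z y w hc2 nyz.symm hzw nyw hc2z hc2y hc3w
  have d24 : c2 ≠ c4 := dc c2 c4 z y w hc2 nyz.symm hzw nyw hc2z hc2y hc4w
  have d34 : c3 ≠ c4 := dc c3 c4 y w x hc3 nyw nxy.symm nxw.symm hc3y hc3w hc4x
  have d01 : c0 ≠ c1 := dc c0 c1 x y z hc0 nxy nxz nyz hc0x hc0y hc1z
  have d02 : c0 ≠ c2 := dc c0 c2 x y z hc0 nxy nxz nyz hc0x hc0y hc2z
  have d03 : c0 ≠ c3 := dc c0 c3 x y w hc0 nxy nxw nyw hc0x hc0y hc3w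
  have d04 : c0 ≠ c4 := dc c0 c4 x y w hc0 nxy nxw nyw hc0x hc0y hc4w
  have cv : ∀ c p : V, ¬ isVar c → isVar p → c ≠ p := by rintro c p hc hp rfl; exact hc hp
  have f0 : c0 ≠ x := cv c0 x hc0 hvx
  have f1 : x ≠ c0 := f0.symm
  have f2 : c0 ≠ y := cv c0 y hc0 hvy
  have f3 : y ≠ c0 := f2.symm
  have f4 : c0 ≠ z := cv c0 z hc0 hvz
  have f5 : z ≠ c0 := f4.symm
  have f6 : c0 ≠ w := cv c0 w hc0 hvw
  have f7 : w ≠ c0 := f6.symm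
  have f8 : c1 ≠ x := cv c1 x hc1 hvx
  have f9 : x ≠ c1 := f8.symm
  have f10 : c1 ≠ y := cv c1 y hc1 hvy
  have f11 : y ≠ c1 := f10.symm
  have f12 : c1 ≠ z := cv c1 z hc1 hvz
  have f13 : z ≠ c1 := f12.symm
  have f14 : c1 ≠ w := cv c1 w hc1 hvw
  have f15 : w ≠ c1 := f14.symm
  have f16 : c2 ≠ x := cv c2 x hc2 hvx
  have f17 : x ≠ c2 := f16.symm
  have f18 : c2 ≠ y := cv c2 y hc2 hvy
  have f19 : y ≠ c2 := f18.symm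
  have f20 : c2 ≠ z := cv c2 z hc2 hvz
  have f21 : z ≠ c2 := f20.symm
  have f22 : c2 ≠ w := cv c2 w hc2 hvw
  have f23 : w ≠ c2 := f22.symm
  have f24 : c3 ≠ x := cv c3 x hc3 hvx
  have f25 : x ≠ c3 := f24.symm
  have f26 : c3 ≠ y := cv c3 y hc3 hvy
  have f27 : y ≠ c3 := f26.symm
  have f28 : c3 ≠ z := cv c3 z hc3 hvz
  have f29 : z ≠ c3 := f28.symm
  have f30 : c3 ≠ w := cv c3 w hc3 hvw
  have f31 : w ≠ c3 := f30.symm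
  have f32 : c4 ≠ x := cv c4 x hc4 hvx
  have f33 : x ≠ c4 := f32.symm
  have f34 : c4 ≠ y := cv c4 y hc4 hvy
  have f35 : y ≠ c4 := f34.symm
  have f36 : c4 ≠ z := cv c4 z hc4 hvz
  have f37 : z ≠ c4 := f36.symm
  have f38 : c4 ≠ w := cv c4 w hc4 hvw
  have f39 : w ≠ c4 := f38.symm
  have f40 : x ≠ y := nxy
  have f41 : y ≠ x := nxy.symm
  have f42 : x ≠ z := nxz
  have f43 : z ≠ x := nxz.symm
  have f44 : x ≠ w := nxw
  have f45 : w ≠ x := nxw.symm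
  have f46 : y ≠ z := nyz
  have f47 : z ≠ y := nyz.symm
  have f48 : y ≠ w := nyw
  have f49 : w ≠ y := nyw.symm
  have f50 : z ≠ w := hzw
  have f51 : w ≠ z := hzw.symm
  have f52 : c1 ≠ c2 := d12
  have f53 : c2 ≠ c1 := d12.symm
  have f54 : c1 ≠ c3 := d13
  have f55 : c3 ≠ c1 := d13.symm
  have f56 : c1 ≠ c4 := d14
  have f57 : c4 ≠ c1 := d14.symm
  have f58 : c2 ≠ c3 := d23
  have f59 : c3 ≠ c2 := d23.symm
  have f60 : c2 ≠ c4 := d24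
  have f61 : c4 ≠ c2 := d24.symm
  have f62 : c3 ≠ c4 := d34
  have f63 : c4 ≠ c3 := d34.symm
  have f64 : c0 ≠ c1 := d01
  have f65 : c1 ≠ c0 := d01.symm
  have f66 : c0 ≠ c2 := d02
  have f67 : c2 ≠ c0 := d02.symm
  have f68 : c0 ≠ c3 := d03
  have f69 : c3 ≠ c0 := d03.symm
  have f70 : c0 ≠ c4 := d04
  have f71 : c4 ≠ c0 := d04.symm
  let p : G.Walk x x :=
    Walk.cons hc1x.symm (Walk.cons hc1z (Walk.cons hc2z.symm (Walk.cons hc2y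
      (Walk.cons hc3y.symm (Walk.cons hc3w (Walk.cons hc4w.symm (Walk.cons hc4x Walk.nil)))))))
  have hcyc : p.IsCycle := by
    constructor
    · constructor
      · constructor
        simp only [p, Walk.edges_cons, Walk.edges_nil, List.nodup_cons, List.mem_cons,
          List.not_mem_nil, or_false, List.nodup_nil, and_true, Sym2.eq_iff]
        simp_all only [ne_eq, not_false_eq_true, and_true, true_and, or_self, not_or,
          and_self, false_and, and_false, or_false, false_or]
      · simp [p]
    · simp only [p, Walk.support_cons, Walk.support_nil, List.tail_cons, List.nodup_cons,
        List.mem_cons, List.not_mem_nil, or_false, List.nodup_nil, and_true,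
        List.mem_singleton]
      simp_all only [ne_eq, not_false_eq_true, and_true, true_and, or_self, not_or,
        and_self, false_and, and_false, or_false, false_or, not_true_eq_false, or_true,
        true_or]
  apply h8 x p hcyc (by simp [p])
  refine Or.inr ⟨c0, ?_, x, ?_, y, ?_, nxy, hc0x, hc0y⟩
  · simp only [p, Walk.support_cons, Walk.support_nil, List.mem_cons, List.not_mem_nil,
      or_false, List.mem_singleton]
    simp_all only [ne_eq, not_false_eq_true, and_true, true_and, or_self, not_or,
      and_self, false_and, and_false, or_false, false_or, not_true_eq_false, or_true,
      true_or]
  · simp [p]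
  · simp [p]

/-- VN-degree of a variable equals the number of degree-2 checks at it. -/
lemma degVN
    (hbip : ∀ x y, G.Adj x y → (isVar x ↔ ¬ isVar y))
    (hdegC : ∀ w, ¬ isVar w → G.degree w = 1 ∨ G.degree w = 2)
    (h4 : ∀ (v : V) (c : G.Walk v v), c.IsCycle → c.length ≠ 4)
    (v : V) (hv : isVar v) :
    (VN G isVar).degree v
      = ((G.neighborFinset v).filter (fun c => G.degree c = 2)).card := by
  classical
  rw [← card_neighborFinset_eq_degree]
  apply le_antisymm
  · apply Finset.card_le_card_of_injOn
      (fun u => if h : ∃ c, ¬ isVar c ∧ G.Adj c v ∧ G.Adj c u then h.choose else v)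
    · intro u hu
      rw [mem_coe, mem_neighborFinset] at hu
      obtain ⟨hne, -, hvu, c, hc, hcv, hcu⟩ := hu
      have hex : ∃ c, ¬ isVar c ∧ G.Adj c v ∧ G.Adj c u := ⟨c, hc, hcv, hcu⟩
      simp only [dif_pos hex]
      obtain ⟨hc', hcv', hcu'⟩ := hex.choose_spec
      rw [mem_coe, mem_filter, mem_neighborFinset]
      refine ⟨hcv'.symm, ?_⟩
      rcases hdegC _ hc' with h1 | h2
      · exfalso
        have hsub : ({v, u} : Finset V) ⊆ G.neighborFinset hex.choose := by
          intro t ht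
          simp only [mem_insert, mem_singleton] at ht
          rcases ht with rfl | rfl <;> simp [hcv', hcu']
        have : 2 ≤ G.degree hex.choose := by
          rw [← card_neighborFinset_eq_degree]
          calc 2 = ({v, u} : Finset V).card := by rw [card_insert_of_notMem (by simp [hne]), card_singleton]
            _ ≤ _ := card_le_card hsub
        omega
      · exact h2
    · intro u1 h1 u2 h2 heq
      by_contra hne12
      rw [mem_coe, mem_neighborFinset] at h1 h2
      obtain ⟨hne1, -, -, c, hc, hcv, hcu⟩ := h1
      obtain ⟨hne2, -, -, c', hc', hcv', hcu'⟩ := h2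
      have hex1 : ∃ c, ¬ isVar c ∧ G.Adj c v ∧ G.Adj c u1 := ⟨c, hc, hcv, hcu⟩
      have hex2 : ∃ c, ¬ isVar c ∧ G.Adj c v ∧ G.Adj c u2 := ⟨c', hc', hcv', hcu'⟩
      simp only [dif_pos hex1, dif_pos hex2] at heq
      obtain ⟨ha1, ha2, ha3⟩ := hex1.choose_spec
      obtain ⟨hb1, hb2, hb3⟩ := hex2.choose_spec
      rw [heq] at ha2 ha3
      exact deg3 G isVar hdegC hb1 hne1 hne2 hne12 hb2 ha3 hb3
  · apply Finset.card_le_card_of_injOn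
      (fun c => if h : ∃ u, G.Adj c u ∧ u ≠ v then h.choose else v)
    · intro c hcm
      rw [mem_coe, mem_filter, mem_neighborFinset] at hcm
      obtain ⟨hadj, hdeg⟩ := hcm
      have hcnv : ¬ isVar c := ((hbip v c hadj).mp hv)
      have hex : ∃ u, G.Adj c u ∧ u ≠ v := by
        have hcard : (G.neighborFinset c).card = 2 := by
          rw [card_neighborFinset_eq_degree]; exact hdeg
        by_contra hno
        push_neg at hno
        have : G.neighborFinset c ⊆ {v} := by
          intro t ht
          rw [mem_neighborFinset] at ht
          simp [hno t ht]
        have := card_le_card this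
        simp [hcard] at this
      simp only [dif_pos hex]
      obtain ⟨hu1, hu2⟩ := hex.choose_spec
      rw [mem_coe, mem_neighborFinset]
      have hvaru : isVar hex.choose := by
        by_contra hnv
        exact hcnv ((hbip c hex.choose hu1).mpr hnv)
      exact ⟨hu2.symm, hv, hvaru, c, hcnv, hadj.symm, hu1⟩
    · intro c1 h1 c2 h2 heq
      by_contra hne12
      rw [mem_coe, mem_filter, mem_neighborFinset] at h1 h2
      obtain ⟨hadj1, hdeg1⟩ := h1
      obtain ⟨hadj2, hdeg2⟩ := h2
      have hex1 : ∃ u, G.Adj c1 u ∧ u ≠ v := by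
        have hcard : (G.neighborFinset c1).card = 2 := by
          rw [card_neighborFinset_eq_degree]; exact hdeg1
        by_contra hno
        push_neg at hno
        have : G.neighborFinset c1 ⊆ {v} := by
          intro t ht
          rw [mem_neighborFinset] at ht
          simp [hno t ht]
        have := card_le_card this
        simp [hcard] at this
      have hex2 : ∃ u, G.Adj c2 u ∧ u ≠ v := by
        have hcard : (G.neighborFinset c2).card = 2 := by
          rw [card_neighborFinset_eq_degree]; exact hdeg2
        by_contra hno
        push_neg at hno
        have : G.neighborFinset c2 ⊆ {v} := by
          intro t ht
          rw [mem_neighborFinset] at ht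
          simp [hno t ht]
        have := card_le_card this
        simp [hcard] at this
      simp only [dif_pos hex1, dif_pos hex2] at heq
      obtain ⟨ha1, ha2⟩ := hex1.choose_spec
      obtain ⟨hb1, hb2⟩ := hex2.choose_spec
      rw [heq] at ha1
      exact fourcyc G h4 hb2.symm hne12 hadj1.symm (heq ▸ ha1) hadj2.symm hb1

end Aux

/-- Let `G` be a bipartite (Tanner) graph whose variable nodes all have degree
`γ ≥ 3` and whose check nodes have degree 1 or 2, which is 4-cycle free and in which
every 8-cycle is chordless.  If `G` has `a` variable nodes and `b` degree-1 check
nodes with `b < a`, then `a ≥ 2γ − 2`. -/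
theorem stmt_10 {V : Type*} [Fintype V] [DecidableEq V]
    (G : SimpleGraph V) [DecidableRel G.Adj]
    (isVar : V → Prop) [DecidablePred isVar]
    (hbip : ∀ x y, G.Adj x y → (isVar x ↔ ¬ isVar y))
    (γ : ℕ) (hγ : 3 ≤ γ)
    (hdegV : ∀ v, isVar v → G.degree v = γ)
    (hdegC : ∀ w, ¬ isVar w → G.degree w = 1 ∨ G.degree w = 2)
    (h4 : ∀ (v : V) (c : G.Walk v v), c.IsCycle → c.length ≠ 4)
    (h8 : ∀ (v : V) (c : G.Walk v v), c.IsCycle → c.length = 8 → ¬ HasChord G c)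
    (a b : ℕ)
    (ha : a = (univ.filter isVar).card)
    (hb : b = (univ.filter (fun w => ¬ isVar w ∧ G.degree w = 1)).card)
    (hba : b < a) :
    2 * γ - 2 ≤ a := by
  classical
  set vars := (univ.filter isVar : Finset V) with hvars
  have key : ∀ v ∈ vars, (VN G isVar).degree v
      + ((G.neighborFinset v).filter (fun c => G.degree c = 1)).card = γ := by
    intro v hv
    rw [hvars, mem_filter] at hv
    have hv := hv.2
    rw [degVN G isVar hbip hdegC h4 v hv]
    have hcheck : ∀ c ∈ G.neighborFinset v, ¬ isVar c := by
      intro c hc; rw [mem_neighborFinset] at hc; exact (hbip v c hc).mp hv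
    have hpart := Finset.card_filter_add_card_filter_not
      (s := G.neighborFinset v) (p := fun c => G.degree c = 2)
    rw [card_neighborFinset_eq_degree, hdegV v hv] at hpart
    have heq2 : (G.neighborFinset v).filter (fun c => ¬ G.degree c = 2)
        = (G.neighborFinset v).filter (fun c => G.degree c = 1) := by
      apply filter_congr; intro c hc
      rcases hdegC c (hcheck c hc) with h | h <;> simp [h]
    rw [heq2] at hpart
    exact hpart
  have hsum1 : ∑ v ∈ vars, ((G.neighborFinset v).filter (fun c => G.degree c = 1)).card
      = b := by
    have step1 : ∀ v ∈ vars, ((G.neighborFinset v).filter (fun c => G.degree c = 1)).card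
        = ∑ c ∈ univ.filter (fun w => ¬ isVar w ∧ G.degree w = 1),
            if G.Adj v c then 1 else 0 := by
      intro v hv
      rw [hvars, mem_filter] at hv
      have hv := hv.2
      rw [← Finset.card_filter]
      congr 1
      ext c
      simp only [mem_filter, mem_neighborFinset, mem_univ, true_and]
      constructor
      · rintro ⟨hadj, hdeg⟩; exact ⟨⟨(hbip v c hadj).mp hv, hdeg⟩, hadj⟩
      · rintro ⟨⟨-, hdeg⟩, hadj⟩; exact ⟨hadj, hdeg⟩
    rw [Finset.sum_congr rfl step1, Finset.sum_comm, hb, Finset.card_eq_sum_ones]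
    apply Finset.sum_congr rfl
    intro c hc
    rw [mem_filter] at hc
    obtain ⟨-, hcv, hcd⟩ := hc
    rw [← Finset.card_filter]
    have hfe : vars.filter (fun v => G.Adj v c) = G.neighborFinset c := by
      ext u
      simp only [hvars, mem_filter, mem_univ, true_and, mem_neighborFinset]
      constructor
      · rintro ⟨-, hadj⟩; exact hadj.symm
      · intro hadj
        refine ⟨?_, hadj.symm⟩
        by_contra hnv
        exact hcv ((hbip c u hadj).mpr hnv)
    rw [hfe, card_neighborFinset_eq_degree, hcd]
  have hsum2 : ∑ v ∈ vars, (VN G isVar).degree v + b = a * γ := by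
    rw [← hsum1, ← Finset.sum_add_distrib, Finset.sum_congr rfl key, Finset.sum_const,
      smul_eq_mul, ha, mul_comm]
  have hex : ∃ v ∈ vars, γ ≤ (VN G isVar).degree v := by
    by_contra hno
    push_neg at hno
    have hle : ∑ v ∈ vars, (VN G isVar).degree v ≤ ∑ _v ∈ vars, (γ - 1) :=
      Finset.sum_le_sum fun v hv => by have := hno v hv; omega
    rw [Finset.sum_const, smul_eq_mul, ← ha] at hle
    have hmg : a * (γ - 1) + a = a * γ := by
      have hg1 : γ - 1 + 1 = γ := by omega
      calc a * (γ - 1) + a = a * ((γ - 1) + 1) := by ring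
        _ = a * γ := by rw [hg1]
    omega
  obtain ⟨v, hvmem, hvd⟩ := hex
  have hvar : isVar v := by rw [hvars, mem_filter] at hvmem; exact hvmem.2
  have hdveq : (VN G isVar).degree v = γ := le_antisymm (by have := key v hvmem; omega) hvd
  set N := (VN G isVar).neighborFinset v with hN
  have hNcard : N.card = γ := by rw [hN, card_neighborFinset_eq_degree, hdveq]
  have hNsub : N ⊆ vars := by
    intro u hu
    rw [hN, mem_neighborFinset] at hu
    rw [hvars, mem_filter]
    exact ⟨mem_univ u, hu.2.2.1⟩
  have hvN : v ∉ N := by rw [hN]; exact (VN G isVar).notMem_neighborFinset_self v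
  set R := vars \ insert v N with hR
  have hins : insert v N ⊆ vars := insert_subset hvmem hNsub
  have hinscard : (insert v N).card = γ + 1 := by rw [card_insert_of_notMem hvN, hNcard]
  have hage : γ + 1 ≤ a := by
    rw [ha, ← hinscard]; exact card_le_card hins
  set r := R.card with hr
  have hRcard : r = a - (γ + 1) := by
    rw [hr, hR, card_sdiff_of_subset hins, hinscard, ha, hvars]
  have hacard : a = 1 + γ + r := by omega
  have hmatch : ∀ u ∈ N, (((VN G isVar).neighborFinset u) ∩ N).card ≤ 1 := by
    intro u hu
    by_contra hlt
    push_neg at hlt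
    obtain ⟨w1, hw1, w2, hw2, hww⟩ := Finset.one_lt_card.mp hlt
    rw [mem_inter, mem_neighborFinset] at hw1 hw2
    have hu' : (VN G isVar).Adj v u := by rw [hN, mem_neighborFinset] at hu; exact hu
    have hw1' : (VN G isVar).Adj v w1 := by
      have := hw1.2; rw [hN, mem_neighborFinset] at this; exact this
    have hw2' : (VN G isVar).Adj v w2 := by
      have := hw2.2; rw [hN, mem_neighborFinset] at this; exact this
    exact diamondfree G isVar hbip hdegC h8 hww hu' hw1' hw1.1 hw2' hw2.1
  have hdecomp : ∀ w ∈ vars, w = v ∨ w ∈ N ∨ w ∈ R := by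
    intro w hw
    by_cases h1 : w ∈ insert v N
    · rw [mem_insert] at h1; tauto
    · right; right; rw [hR, mem_sdiff]; exact ⟨hw, h1⟩
  have hdegN : ∀ u ∈ N, (VN G isVar).degree u ≤ 2 + r := by
    intro u hu
    have hsub2 : (VN G isVar).neighborFinset u ⊆ insert v ((((VN G isVar).neighborFinset u) ∩ N) ∪ R) := by
      intro w hw
      have hwvar : w ∈ vars := by
        rw [mem_neighborFinset] at hw
        rw [hvars, mem_filter]
        exact ⟨mem_univ w, hw.2.2.1⟩
      rcases hdecomp w hwvar with rfl | h | h
      · exact mem_insert_self _ _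
      · exact mem_insert_of_mem (mem_union_left _ (mem_inter.mpr ⟨hw, h⟩))
      · exact mem_insert_of_mem (mem_union_right _ h)
    have hc1 := card_le_card hsub2
    have hc2 := card_insert_le v ((((VN G isVar).neighborFinset u) ∩ N) ∪ R)
    have hc3 := card_union_le (((VN G isVar).neighborFinset u) ∩ N) R
    have hc4 := hmatch u hu
    rw [← card_neighborFinset_eq_degree]
    omega
  have hdegAll : ∀ u ∈ vars, (VN G isVar).degree u ≤ γ := fun u hu => by have := key u hu; omega
  have hsplit : ∑ u ∈ vars, (VN G isVar).degree u
      = ∑ u ∈ R, (VN G isVar).degree u + ((VN G isVar).degree v + ∑ u ∈ N, (VN G isVar).degree u) := by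
    rw [← Finset.sum_sdiff hins, Finset.sum_insert hvN, hR]
  have hbN : ∑ u ∈ N, (VN G isVar).degree u ≤ γ * (2 + r) := by
    calc ∑ u ∈ N, (VN G isVar).degree u ≤ ∑ _u ∈ N, (2 + r) := Finset.sum_le_sum hdegN
      _ = γ * (2 + r) := by rw [Finset.sum_const, hNcard, smul_eq_mul]
  have hbR : ∑ u ∈ R, (VN G isVar).degree u ≤ r * γ := by
    calc ∑ u ∈ R, (VN G isVar).degree u ≤ ∑ _u ∈ R, γ :=
          Finset.sum_le_sum fun u hu => hdegAll u (by rw [hR] at hu; exact (mem_sdiff.mp hu).1)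
      _ = r * γ := by rw [Finset.sum_const, smul_eq_mul, hr]
  have hS : ∑ u ∈ vars, (VN G isVar).degree u ≤ r * γ + (γ + γ * (2 + r)) := by
    rw [hsplit, hdveq]
    exact add_le_add hbR (add_le_add_right hbN γ)
  by_contra hcon
  push_neg at hcon
  have hrg : r + 4 ≤ γ := by omega
  have hmul : (r + 4) * γ ≤ γ * γ := Nat.mul_le_mul_right _ hrg
  have haγ : a * γ = γ + γ * γ + r * γ := by rw [hacard]; ring
  nlinarith [hsum2, hba, hS, hmul, haγ]
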